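/- For any subvariety V of E^g, any ε ≥ 0, any positive integer r, and any subgroup Γ of E^g of finite rank with division group Γ_0 ⊆ E, the map x ↦ (x, γ) defines an injection of S_r(V, Γ_ε) into S_r(V × γ, O_ε), where γ = (γ_1,...,γ_s) is a maximal free set of Γ_0. -/

import Mathlib

lemma rank_aux {n g s : ℕ} (φ : Matrix (Fin n) (Fin g) ℤ) (M : ℤ) (hM : M ≠ 0)
    (ψ : Matrix (Fin n) (Fin g ⊕ Fin s) ℤ) (hψ : ∀ i j, ψ i (Sum.inl j) = M * φ i j) :
    φ.rank ≤ ψ.rank := by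
  have key : (M • φ).rank ≤ ψ.rank := by
    unfold Matrix.rank
    apply Submodule.finrank_mono
    rintro y ⟨v, rfl⟩
    exact ⟨Sum.elim v 0, by
      ext i
      simp [Matrix.mulVecLin_apply, Matrix.mulVec, dotProduct,
        Fintype.sum_sum_type, hψ, mul_assoc, Finset.mul_sum]⟩
  refine le_trans (le_of_eq ?_) key
  unfold Matrix.rank
  have hcomp : (M • φ).mulVecLin = (M • (LinearMap.id : (Fin n → ℤ) →ₗ[ℤ] (Fin n → ℤ))) ∘ₗ φ.mulVecLin := by
    ext v i
    simp [Matrix.mulVecLin_apply, Matrix.smul_mulVec]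
  rw [hcomp, LinearMap.range_comp]
  have hinj : Function.Injective (M • (LinearMap.id : (Fin n → ℤ) →ₗ[ℤ] (Fin n → ℤ))) := by
    intro a b hab
    have : M • a = M • b := hab
    exact smul_right_injective _ hM this
  exact (LinearEquiv.finrank_eq
    (Submodule.equivMapOfInjective _ hinj (LinearMap.range φ.mulVecLin)))

/-- Membership in `S_r(X, F) = X ∩ ⋃_{cod B ≥ r} (B + F)`, the algebraic subgroups `B`
of codimension at least `r` being kernels of integer-matrix morphisms of rank `≥ r`. -/
def SrMem {E : Type*} [AddCommGroup E] {ι : Type} [Fintype ι] [DecidableEq ι]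
    (r : ℕ) (X F : Set (ι → E)) (x : ι → E) : Prop :=
  x ∈ X ∧ ∃ (n : ℕ) (φ : Matrix (Fin n) ι ℤ), r ≤ φ.rank ∧
    ∃ f ∈ F, ∀ i, ∑ j, φ i j • (x j - f j) = 0

/-- The division group `Γ₀ ⊆ E` of the coordinates group of `Γ ⊆ E^g`:
`{y ∈ E : N·y ∈ π(Γ)}` for some nonzero integer `N` and coordinate projection `π`. -/
def divGroup {E : Type*} [AddCommGroup E] {g : ℕ} (Γ : AddSubgroup (Fin g → E)) :
    Set E :=
  {y | ∃ N : ℤ, N ≠ 0 ∧ ∃ x ∈ Γ, ∃ kk : Fin g, N • y = x kk}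

/-- let `E` be the (divisible) group of algebraic points of an elliptic
curve without CM with Néron–Tate max semi-norm `ν`, `V ⊆ E^g` a subvariety, `ε ≥ 0`,
`r ≥ 1`, `Γ ⊆ E^g` a subgroup of finite rank, and `γ = (γ₁,…,γ_s)` a maximal free set
of the division group `Γ₀` of `Γ`.  Then `x ↦ (x, γ)` defines an injection of
`S_r(V, Γ_ε)` into `S_r(V × γ, O_ε)`, where `Γ_ε = Γ + O_ε` and
`O_ε = {ξ : ‖ξ‖ ≤ ε}`. -/
theorem stmt_17 {E : Type*} [AddCommGroup E] {g s : ℕ}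
    (hdiv : ∀ (n : ℤ), n ≠ 0 → ∀ e : E, ∃ e' : E, n • e' = e)
    (ν : E → ℝ) (hν0 : ∀ e : E, 0 ≤ ν e)
    (hνadd : ∀ e f : E, ν (e + f) ≤ ν e + ν f)
    (hνsmul : ∀ (n : ℤ) (e : E), ν (n • e) = |(n : ℝ)| * ν e)
    (V : Set (Fin g → E)) (ε : ℝ) (hε : 0 ≤ ε) (r : ℕ) (hr : 0 < r)
    (Γ : AddSubgroup (Fin g → E))
    (γ : Fin s → E)
    (hγmem : ∀ i, γ i ∈ divGroup Γ)
    (hγind : ∀ b : Fin s → ℤ, ∑ i, b i • γ i = 0 → b = 0)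
    (hγmax : ∀ y ∈ divGroup Γ, ∃ N : ℤ, N ≠ 0 ∧ ∃ b : Fin s → ℤ, N • y = ∑ i, b i • γ i) :
    Function.Injective (fun x : Fin g → E => Sum.elim x γ) ∧
      ∀ x : Fin g → E,
        SrMem r V {w : Fin g → E | ∃ u ∈ Γ, ∀ kk, ν (w kk - u kk) ≤ ε} x →
        SrMem r
          {z : Fin g ⊕ Fin s → E | (fun i => z (Sum.inl i)) ∈ V ∧ ∀ j, z (Sum.inr j) = γ j}
          {w : Fin g ⊕ Fin s → E | ∀ kk, ν (w kk) ≤ ε}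
          (Sum.elim x γ) := by
  constructor
  · intro x x' h
    funext i
    exact congrFun h (Sum.inl i)
  rintro x ⟨hxV, n, φ, hrank, f, ⟨u, huΓ, huε⟩, hφ⟩
  -- express a multiple of each coordinate of u in terms of γ
  have hudiv : ∀ j, u j ∈ divGroup Γ := fun j => ⟨1, one_ne_zero, u, huΓ, j, by simp⟩
  choose N hN b hb using fun j => hγmax (u j) (hudiv j)
  set M : ℤ := ∏ j, N j with hMdef
  have hM : M ≠ 0 := Finset.prod_ne_zero_iff.mpr fun j _ => hN j
  set A : Fin g → Fin s → ℤ := fun j l => (∏ j' ∈ Finset.univ.erase j, N j') * b j l with hAdef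
  have hAu : ∀ j, M • u j = ∑ l, A j l • γ l := by
    intro j
    have hMfac : M = N j * ∏ j' ∈ Finset.univ.erase j, N j' :=
      (Finset.mul_prod_erase Finset.univ N (Finset.mem_univ j)).symm
    rw [hMfac, mul_comm, mul_smul, hb j, Finset.smul_sum]
    exact Finset.sum_congr rfl fun l _ => by rw [hAdef, mul_smul]
  -- the new matrix
  set ψ : Matrix (Fin n) (Fin g ⊕ Fin s) ℤ :=
    fun i => Sum.elim (fun j => M * φ i j) (fun l => -∑ j, φ i j * A j l) with hψdef
  have hν0' : ν 0 = 0 := by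
    have := hνsmul 0 0
    simpa using this
  refine ⟨⟨hxV, fun j => rfl⟩, n, ψ, le_trans hrank (rank_aux φ M hM ψ fun i j => rfl),
    Sum.elim (fun j => f j - u j) 0, ?_, ?_⟩
  · intro kk
    cases kk with
    | inl j => exact huε j
    | inr l => simpa [hν0'] using hε
  · intro i
    have key : ∑ j, (M * φ i j) • (u j : E) = ∑ l, (∑ j, φ i j * A j l) • γ l := by
      calc ∑ j, (M * φ i j) • u j = ∑ j, ∑ l, (φ i j * A j l) • γ l := by
            refine Finset.sum_congr rfl fun j _ => ?_
            rw [mul_comm, mul_smul, hAu j, Finset.smul_sum]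
            exact Finset.sum_congr rfl fun l _ => by simp only [hAdef, mul_smul]
        _ = ∑ l, (∑ j, φ i j * A j l) • γ l := by
            rw [Finset.sum_comm]
            exact Finset.sum_congr rfl fun l _ => by rw [Finset.sum_smul]
    have hzero : ∑ j, (M * φ i j) • (x j - f j) = 0 := by
      have : ∑ j, (M * φ i j) • (x j - f j) = M • ∑ j, φ i j • (x j - f j) := by
        rw [Finset.smul_sum]
        exact Finset.sum_congr rfl fun j _ => by rw [mul_smul]
      rw [this, hφ i, smul_zero]
    rw [Fintype.sum_sum_type]
    simp only [hψdef, Sum.elim_inl, Sum.elim_inr, sub_zero]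
    have hsplit : ∀ j, (M * φ i j) • (x j - (f j - u j))
        = (M * φ i j) • (x j - f j) + (M * φ i j) • u j := by
      intro j
      rw [← smul_add]
      congr 1
      abel
    rw [Finset.sum_congr rfl fun j _ => hsplit j, Finset.sum_add_distrib, hzero, zero_add, key]
    simp [neg_smul]
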